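/- arXiv:2311.00005 — 5 statements merged into one kernel-verified Lean document; each statement's English description precedes it below -/
import Mathlib

section
/- If f : ℕ → ℝ satisfies ∑_{n ≤ x} f(n) = c·x + O(g(x)) as x → ∞ with c ≠ 0 and g monotone nonnegative, then ∑_{n ≤ x} n·f(n) = (c/2)·x² + O(x·g(x)) + O(∫_1^x g(t) dt) + O(1). -/
open Filter Finset Asymptotics

private lemma abel_id (f : ℕ → ℝ) :
    ∀ N : ℕ, ∑ n ∈ Finset.Icc 1 N, (n : ℝ) * f n
      = N * (∑ n ∈ Finset.Icc 1 N, f n)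
        - ∑ k ∈ Finset.Icc 1 (N - 1), ∑ n ∈ Finset.Icc 1 k, f n := by
  intro N
  induction N with
  | zero => simp
  | succ m ih =>
    rw [Finset.sum_Icc_succ_top (by omega : 1 ≤ m + 1),
        Finset.sum_Icc_succ_top (by omega : 1 ≤ m + 1), ih]
    have hsplit : ∑ k ∈ Finset.Icc 1 (m + 1 - 1), ∑ n ∈ Finset.Icc 1 k, f n
        = (∑ k ∈ Finset.Icc 1 (m - 1), ∑ n ∈ Finset.Icc 1 k, f n)
          + ∑ n ∈ Finset.Icc 1 m, f n := by
      cases m with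
      | zero => simp
      | succ p =>
        rw [Nat.succ_sub_one, Nat.succ_sub_one]
        exact Finset.sum_Icc_succ_top (by omega) _
    rw [hsplit]; push_cast; ring

private lemma gauss_id : ∀ N : ℕ, (∑ k ∈ Finset.Icc 1 N, (k:ℝ)) = N * (N+1) / 2 := by
  intro N
  induction N with
  | zero => simp
  | succ m ih =>
    rw [Finset.sum_Icc_succ_top (by omega : 1 ≤ m + 1), ih]
    push_cast; ring

set_option maxHeartbeats 1000000 in
theorem stmt_1 (f : ℕ → ℝ) (g : ℝ → ℝ) (c : ℝ) (hc : c ≠ 0)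
    (hg_mono : Monotone g) (hg_nonneg : ∀ x, 0 ≤ g x)
    (h : (fun x : ℝ => (∑ n ∈ Finset.Icc 1 ⌊x⌋₊, f n) - c * x) =O[atTop] g) :
    ∃ e₁ e₂ e₃ : ℝ → ℝ,
      (∀ x : ℝ, (∑ n ∈ Finset.Icc 1 ⌊x⌋₊, (n : ℝ) * f n)
          = (c / 2) * x ^ 2 + e₁ x + e₂ x + e₃ x) ∧
      e₁ =O[atTop] (fun x => x * g x) ∧
      e₂ =O[atTop] (fun x => ∫ t in (1:ℝ)..x, g t) ∧
      e₃ =O[atTop] (fun _ => (1 : ℝ)) := by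
  refine ⟨fun x => (∑ n ∈ Finset.Icc 1 ⌊x⌋₊, (n : ℝ) * f n) - (c/2) * x^2,
    fun _ => 0, fun _ => 0, fun x => by ring, ?_, isBigO_zero _ _, isBigO_zero _ _⟩
  -- main bound
  obtain ⟨C, hCpos, hCw⟩ := h.exists_pos
  have hb := hCw.bound
  rw [eventually_atTop] at hb
  obtain ⟨X₀, hX₀⟩ := hb
  -- clean form of the hypothesis
  have hB : ∀ x : ℝ, X₀ ≤ x → |(∑ n ∈ Finset.Icc 1 ⌊x⌋₊, f n) - c * x| ≤ C * g x := by
    intro x hx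
    have := hX₀ x hx
    simpa [Real.norm_eq_abs, abs_of_nonneg (hg_nonneg x)] using this
  -- lower bound on g
  set N₀ : ℕ := ⌈max X₀ 1⌉₊ with hN₀def
  have hN₀X : X₀ ≤ (N₀ : ℝ) := le_trans (le_max_left _ _) (Nat.le_ceil _)
  have hy : X₀ ≤ (N₀ : ℝ) + 1/2 := by linarith
  have hfloor : ⌊(N₀ : ℝ) + 1/2⌋₊ = N₀ := by
    rw [Nat.floor_eq_iff (by positivity)]
    constructor <;> [skip; push_cast] <;> norm_num
  set δ : ℝ := |c| / (4 * C) with hδdef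
  have hδpos : 0 < δ := by positivity
  have hgδ : ∀ x : ℝ, (N₀ : ℝ) + 1 ≤ x → δ ≤ g x := by
    intro x hx
    have h1 := hB (N₀ : ℝ) hN₀X
    have h2 := hB ((N₀ : ℝ) + 1/2) hy
    rw [hfloor] at h2
    rw [Nat.floor_natCast] at h1
    have hgm : g (N₀ : ℝ) ≤ g ((N₀:ℝ) + 1/2) := hg_mono (by linarith)
    have hkey : |c| / 2 ≤ 2 * C * g ((N₀:ℝ) + 1/2) := by
      have := abs_sub_abs_le_abs_sub ((∑ n ∈ Finset.Icc 1 N₀, f n) - c * ((N₀:ℝ) + 1/2))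
        ((∑ n ∈ Finset.Icc 1 N₀, f n) - c * (N₀:ℝ))
      have h3 : |((∑ n ∈ Finset.Icc 1 N₀, f n) - c * ((N₀:ℝ) + 1/2))
          - ((∑ n ∈ Finset.Icc 1 N₀, f n) - c * (N₀:ℝ))| = |c| / 2 := by
        have : ((∑ n ∈ Finset.Icc 1 N₀, f n) - c * ((N₀:ℝ) + 1/2))
            - ((∑ n ∈ Finset.Icc 1 N₀, f n) - c * (N₀:ℝ)) = -(c/2) := by ring
        rw [this, abs_neg, abs_div]
        norm_num
      calc |c| / 2 = |((∑ n ∈ Finset.Icc 1 N₀, f n) - c * ((N₀:ℝ) + 1/2))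
          - ((∑ n ∈ Finset.Icc 1 N₀, f n) - c * (N₀:ℝ))| := h3.symm
        _ ≤ |(∑ n ∈ Finset.Icc 1 N₀, f n) - c * ((N₀:ℝ) + 1/2)|
            + |(∑ n ∈ Finset.Icc 1 N₀, f n) - c * (N₀:ℝ)| := abs_sub _ _
        _ ≤ C * g ((N₀:ℝ) + 1/2) + C * g (N₀:ℝ) := add_le_add h2 h1
        _ ≤ 2 * C * g ((N₀:ℝ) + 1/2) := by nlinarith
    have : δ ≤ g ((N₀:ℝ) + 1/2) := by
      rw [hδdef, div_le_iff₀ (by positivity)]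
      nlinarith
    exact this.trans (hg_mono (by linarith))
  -- constant D for small k
  set K₀ : ℕ := ⌈X₀⌉₊ with hK₀def
  set D : ℝ := ∑ j ∈ Finset.Icc 1 K₀, |(∑ n ∈ Finset.Icc 1 j, f n) - c * j| with hDdef
  have hDnonneg : 0 ≤ D := Finset.sum_nonneg fun _ _ => abs_nonneg _
  -- the big-O statement
  rw [isBigO_iff]
  refine ⟨2*C + D/δ + |c|/(2*δ), ?_⟩
  rw [eventually_atTop]
  refine ⟨(N₀:ℝ) + 1, fun x hx => ?_⟩
  have hx1 : (1:ℝ) ≤ x := by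
    have : (0:ℝ) ≤ (N₀:ℝ) := Nat.cast_nonneg _
    linarith
  have hx0 : (0:ℝ) ≤ x := by linarith
  set N : ℕ := ⌊x⌋₊ with hNdef
  have hNle : (N : ℝ) ≤ x := Nat.floor_le hx0
  have hNgt : x < (N:ℝ) + 1 := Nat.lt_floor_add_one x
  have hxX₀ : X₀ + 1 ≤ x := by linarith
  have hNX₀ : X₀ ≤ (N : ℝ) := by linarith
  have hgx : δ ≤ g x := hgδ x hx
  have hgxpos : 0 < g x := lt_of_lt_of_le hδpos hgx
  -- notation
  set S : ℕ → ℝ := fun k => ∑ n ∈ Finset.Icc 1 k, f n with hSdef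
  -- identity
  have hsum_sub : ∑ k ∈ Finset.Icc 1 (N-1), (S k - c * k)
      = (∑ k ∈ Finset.Icc 1 (N-1), S k) - c * ∑ k ∈ Finset.Icc 1 (N-1), (k:ℝ) := by
    rw [Finset.sum_sub_distrib, Finset.mul_sum]
  have hN1 : 1 ≤ N := Nat.le_floor (by exact_mod_cast hx1)
  have hNm1 : ((N-1:ℕ):ℝ) = (N:ℝ) - 1 := by
    push_cast [Nat.cast_sub hN1]; ring
  have hgauss : (∑ k ∈ Finset.Icc 1 (N-1), (k:ℝ)) = ((N:ℝ)-1) * (N:ℝ) / 2 := by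
    rw [gauss_id (N-1), hNm1]; ring_nf
  set t : ℝ := x * g x with htdef
  have htpos : 0 < t := by positivity
  have hxt : x ≤ t / δ := by
    rw [le_div_iff₀ hδpos]
    nlinarith
  have hEid : ∑ n ∈ Finset.Icc 1 N, (n:ℝ) * f n - (c/2)*x^2
      = (N:ℝ)*(S N - c*N) - (∑ k ∈ Finset.Icc 1 (N-1), (S k - c*k))
        + (c/2)*((N:ℝ)^2 + (N:ℝ) - x^2) := by
    rw [abel_id f N, hsum_sub, hgauss]
    simp only [hSdef]
    ring
  -- term 1
  have hterm1 : |(N:ℝ)*(S N - c*(N:ℝ))| ≤ C * t := by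
    have hbN := hB (N:ℝ) hNX₀
    rw [Nat.floor_natCast] at hbN
    have hgN : g (N:ℝ) ≤ g x := hg_mono hNle
    rw [abs_mul, Nat.abs_cast]
    have h1 : |S N - c*(N:ℝ)| ≤ C * g x := by
      refine hbN.trans ?_
      exact mul_le_mul_of_nonneg_left hgN hCpos.le
    calc (N:ℝ) * |S N - c*(N:ℝ)| ≤ x * (C * g x) :=
          mul_le_mul hNle h1 (abs_nonneg _) hx0
      _ = C * t := by rw [htdef]; ring
  -- term 2
  have hterm2 : |∑ k ∈ Finset.Icc 1 (N-1), (S k - c*(k:ℝ))| ≤ D/δ * t + C * t := by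
    have hper : ∀ k ∈ Finset.Icc 1 (N-1), |S k - c*(k:ℝ)| ≤ D + C * g x := by
      intro k hk
      rw [Finset.mem_Icc] at hk
      by_cases hkK : k ≤ K₀
      · have hmem : k ∈ Finset.Icc 1 K₀ := Finset.mem_Icc.mpr ⟨hk.1, hkK⟩
        have : |S k - c*(k:ℝ)| ≤ D := by
          rw [hDdef]
          exact Finset.single_le_sum (f := fun j => |S j - c*(j:ℝ)|)
            (fun _ _ => abs_nonneg _) hmem
        have hCg : 0 ≤ C * g x := mul_nonneg hCpos.le (hg_nonneg x)
        linarith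
      · push_neg at hkK
        have hkX₀ : X₀ ≤ (k:ℝ) := by
          refine (Nat.le_ceil X₀).trans ?_
          exact_mod_cast hkK.le
        have hbk := hB (k:ℝ) hkX₀
        rw [Nat.floor_natCast] at hbk
        have hkx : (k:ℝ) ≤ x := by
          have h1 : (k:ℝ) ≤ (N:ℝ) := by exact_mod_cast (by omega : k ≤ N)
          linarith
        have : |S k - c*(k:ℝ)| ≤ C * g x :=
          hbk.trans (mul_le_mul_of_nonneg_left (hg_mono hkx) hCpos.le)
        linarith
    have hcard : ((Finset.Icc 1 (N-1)).card : ℝ) = ((N-1:ℕ):ℝ) := by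
      rw [Nat.card_Icc]
      norm_cast
    calc |∑ k ∈ Finset.Icc 1 (N-1), (S k - c*(k:ℝ))|
        ≤ ∑ k ∈ Finset.Icc 1 (N-1), |S k - c*(k:ℝ)| := Finset.abs_sum_le_sum_abs _ _
      _ ≤ ∑ _k ∈ Finset.Icc 1 (N-1), (D + C * g x) := Finset.sum_le_sum hper
      _ = ((N-1:ℕ):ℝ) * (D + C * g x) := by
          rw [Finset.sum_const, nsmul_eq_mul, hcard]
      _ ≤ x * (D + C * g x) := by
          have h1 : ((N-1:ℕ):ℝ) ≤ x := by rw [hNm1]; linarith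
          have h2 : 0 ≤ D + C * g x := by positivity
          exact mul_le_mul_of_nonneg_right h1 h2
      _ = x * D + C * t := by rw [htdef]; ring
      _ ≤ D/δ * t + C * t := by
          have : x * D ≤ D/δ * t := by
            have := mul_le_mul_of_nonneg_right hxt hDnonneg
            calc x * D ≤ t/δ * D := this
              _ = D/δ * t := by ring
          linarith
  -- term 3
  have hterm3 : |(c/2)*((N:ℝ)^2 + (N:ℝ) - x^2)| ≤ |c|/(2*δ) * t := by
    have habs : |(N:ℝ)^2 + (N:ℝ) - x^2| ≤ x := by
      rw [abs_le]
      have h1 : (N:ℝ)^2 ≤ x^2 := by nlinarith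
      have h2 : (x-1)^2 ≤ (N:ℝ)^2 := by nlinarith
      constructor <;> nlinarith
    rw [abs_mul]
    have h1 : |c/2| = |c|/2 := by rw [abs_div]; norm_num
    rw [h1]
    calc |c|/2 * |(N:ℝ)^2 + (N:ℝ) - x^2| ≤ |c|/2 * x :=
          mul_le_mul_of_nonneg_left habs (by positivity)
      _ ≤ |c|/2 * (t/δ) := mul_le_mul_of_nonneg_left hxt (by positivity)
      _ = |c|/(2*δ) * t := by field_simp
  -- combine
  have hnorm : ‖x * g x‖ = t := by
    rw [Real.norm_eq_abs, abs_of_nonneg (by positivity)]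
  rw [Real.norm_eq_abs, hnorm, hEid]
  calc |(N:ℝ)*(S N - c*(N:ℝ)) - (∑ k ∈ Finset.Icc 1 (N-1), (S k - c*(k:ℝ)))
        + (c/2)*((N:ℝ)^2 + (N:ℝ) - x^2)|
      ≤ |(N:ℝ)*(S N - c*(N:ℝ))| + |∑ k ∈ Finset.Icc 1 (N-1), (S k - c*(k:ℝ))|
        + |(c/2)*((N:ℝ)^2 + (N:ℝ) - x^2)| := by
        refine (abs_add_le _ _).trans ?_
        gcongr
        exact abs_sub _ _
    _ ≤ C * t + (D/δ * t + C * t) + |c|/(2*δ) * t := by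
        gcongr
    _ = (2*C + D/δ + |c|/(2*δ)) * t := by ring
end

section
/- If f : ℕ → ℝ satisfies (1/x)·∑_{n ≤ x} f(n) → c as x → ∞ with c ≠ 0, then for every real s ≥ 1, ∑_{n ≤ x} n^s · f(n) ~ (c/(s+1))·x^{s+1} as x → ∞. -/
open Filter Finset

private lemma rpow_mvt {s : ℝ} (hs : 1 ≤ s) {a b : ℝ} (ha : 0 ≤ a) (hab : a ≤ b) :
    (s+1) * a^s * (b - a) ≤ b^(s+1) - a^(s+1) ∧
      b^(s+1) - a^(s+1) ≤ (s+1) * b^s * (b - a) := by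
  rcases eq_or_lt_of_le hab with rfl | hlt
  · simp
  have hd : ∀ x : ℝ, HasDerivAt (fun y : ℝ => y ^ (s+1)) ((s+1) * x ^ s) x := by
    intro x
    have := Real.hasDerivAt_rpow_const (x := x) (p := s+1) (Or.inr (by linarith))
    simpa [add_sub_cancel_right] using this
  obtain ⟨ξ, hξ, hslope⟩ := exists_hasDerivAt_eq_slope (fun y : ℝ => y ^ (s+1))
    (fun x => (s+1) * x ^ s) hlt
    (fun x _ => (hd x).continuousAt.continuousWithinAt)
    (fun x _ => hd x)
  have hba : (0:ℝ) < b - a := by linarith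
  rw [eq_div_iff hba.ne'] at hslope
  constructor
  · rw [← hslope]
    have h1 : a ^ s ≤ ξ ^ s := Real.rpow_le_rpow ha hξ.1.le (by linarith)
    exact mul_le_mul_of_nonneg_right
      (mul_le_mul_of_nonneg_left h1 (by linarith : (0:ℝ) ≤ s+1)) hba.le
  · rw [← hslope]
    have h1 : ξ ^ s ≤ b ^ s := Real.rpow_le_rpow (ha.trans hξ.1.le) hξ.2.le (by linarith)
    exact mul_le_mul_of_nonneg_right
      (mul_le_mul_of_nonneg_left h1 (by linarith : (0:ℝ) ≤ s+1)) hba.le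

private lemma my_telescope (s : ℝ) (hs : 0 < s) (N : ℕ) :
    ∑ n ∈ range N, (((n:ℝ)+1)^s - (n:ℝ)^s) = (N:ℝ)^s := by
  have := Finset.sum_range_sub (fun n : ℕ => ((n:ℝ))^s) N
  have h0 : ((0:ℕ):ℝ)^s = 0 := by
    norm_num
    exact Real.zero_rpow hs.ne'
  rw [h0, sub_zero] at this
  rw [← this]
  refine Finset.sum_congr rfl fun i _ => ?_
  push_cast
  ring_nf

private lemma icc_sum_eq (φ : ℝ → ℝ) (N : ℕ) :
    ∑ n ∈ Icc 1 N, φ n = ∑ n ∈ range N, φ ((n:ℝ)+1) := by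
  rw [← Finset.Ico_add_one_right_eq_Icc, Finset.sum_Ico_eq_sum_range]
  refine Finset.sum_congr (by norm_num) fun i _ => ?_
  push_cast
  ring_nf

private lemma sum_pow_bounds {s : ℝ} (hs : 1 ≤ s) (N : ℕ) :
    (N:ℝ)^(s+1)/(s+1) ≤ ∑ n ∈ Icc 1 N, (n:ℝ)^s ∧
      ∑ n ∈ Icc 1 N, (n:ℝ)^s ≤ ((N:ℝ)+1)^(s+1)/(s+1) := by
  have hs1 : (0:ℝ) < s + 1 := by linarith
  have hre : ∑ n ∈ Icc 1 N, (n:ℝ)^s = ∑ n ∈ range N, ((n:ℝ)+1)^s :=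
    icc_sum_eq (fun x => x ^ s) N
  constructor
  · rw [div_le_iff₀ hs1, hre]
    calc (N:ℝ)^(s+1) = ∑ n ∈ range N, (((n:ℝ)+1)^(s+1) - (n:ℝ)^(s+1)) :=
          (my_telescope (s+1) hs1 N).symm
      _ ≤ ∑ n ∈ range N, (s+1) * ((n:ℝ)+1)^s := by
          refine Finset.sum_le_sum fun n _ => ?_
          have := (rpow_mvt hs (a := (n:ℝ)) (b := (n:ℝ)+1) (Nat.cast_nonneg n)
            (by linarith)).2
          simpa using this
      _ = (∑ n ∈ range N, ((n:ℝ)+1)^s) * (s+1) := by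
          rw [← Finset.mul_sum]; ring
  · rw [le_div_iff₀ hs1]
    have hre2 : ∑ n ∈ range (N+1), (n:ℝ)^s = ∑ n ∈ Icc 1 N, (n:ℝ)^s := by
      rw [Finset.sum_range_succ' (fun n : ℕ => (n:ℝ)^s) N, hre]
      push_cast
      rw [Real.zero_rpow (by linarith : s ≠ 0), add_zero]
    calc (∑ n ∈ Icc 1 N, (n:ℝ)^s) * (s+1)
        = ∑ n ∈ range (N+1), (s+1) * (n:ℝ)^s := by
          rw [← Finset.mul_sum, hre2]; ring
      _ ≤ ∑ n ∈ range (N+1), (((n:ℝ)+1)^(s+1) - (n:ℝ)^(s+1)) := by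
          refine Finset.sum_le_sum fun n _ => ?_
          have := (rpow_mvt hs (a := (n:ℝ)) (b := (n:ℝ)+1) (Nat.cast_nonneg n)
            (by linarith)).1
          simpa using this
      _ = ((N:ℝ)+1)^(s+1) := by
          rw [my_telescope (s+1) hs1 (N+1)]
          push_cast
          ring_nf

private lemma abel_sum (g : ℕ → ℝ) (s : ℝ) (N : ℕ) :
    ∑ n ∈ Icc 1 N, (n:ℝ)^s * g n =
      (N:ℝ)^s * (∑ n ∈ Icc 1 N, g n)
        - ∑ n ∈ range N, (∑ k ∈ Icc 1 n, g k) * (((n:ℝ)+1)^s - (n:ℝ)^s) := by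
  induction N with
  | zero => simp
  | succ N ih =>
    rw [Finset.sum_Icc_succ_top (by omega : 1 ≤ N+1), ih, Finset.sum_range_succ,
      Finset.sum_Icc_succ_top (by omega : 1 ≤ N+1) g]
    push_cast
    ring

private lemma littleB {g : ℕ → ℝ} {s : ℝ} (hs : 1 ≤ s)
    (hg : Tendsto (fun N : ℕ => (∑ n ∈ Icc 1 N, g n) / N) atTop (nhds 0)) :
    Tendsto (fun N : ℕ => (∑ n ∈ Icc 1 N, (n:ℝ)^s * g n) / (N:ℝ)^(s+1)) atTop (nhds 0) := by
  have hs1 : (0:ℝ) < s + 1 := by linarith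
  set S : ℕ → ℝ := fun n => ∑ k ∈ Icc 1 n, g k with hSdef
  set w : ℕ → ℝ := fun n => ((n:ℝ)+1)^s - (n:ℝ)^s with hwdef
  have hw0 : ∀ n, 0 ≤ w n := fun n =>
    sub_nonneg.mpr (Real.rpow_le_rpow (Nat.cast_nonneg n) (by linarith) (by linarith))
  rw [NormedAddCommGroup.tendsto_nhds_zero]
  intro ε hε
  set ε' : ℝ := ε / 4 with hε'def
  have hε' : 0 < ε' := by positivity
  obtain ⟨N₀', hN₀'⟩ := (Metric.tendsto_atTop.mp hg) ε' hε'
  set N₀ : ℕ := max N₀' 1 with hN₀def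
  have hS : ∀ n : ℕ, N₀ ≤ n → |S n| ≤ ε' * n := by
    intro n hn
    have h1 : 1 ≤ n := le_trans (le_max_right _ _) hn
    have hn0 : (0:ℝ) < n := by exact_mod_cast h1
    have := hN₀' n (le_trans (le_max_left _ _) hn)
    rw [Real.dist_eq, sub_zero, abs_div, abs_of_pos hn0, div_lt_iff₀ hn0] at this
    exact this.le
  set C : ℝ := ∑ n ∈ range N₀, |S n| * w n with hCdef
  have hC0 : 0 ≤ C :=
    Finset.sum_nonneg fun n _ => mul_nonneg (abs_nonneg _) (hw0 n)
  have key : ∀ N : ℕ, N₀ ≤ N →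
      |∑ n ∈ Icc 1 N, (n:ℝ)^s * g n| ≤ C + 2 * ε' * (N:ℝ)^(s+1) := by
    intro N hN
    have h1 : 1 ≤ N := le_trans (le_max_right _ _) hN
    have hNpos : (0:ℝ) < N := by exact_mod_cast h1
    rw [abel_sum g s N]
    have hb1 : |(N:ℝ)^s * S N| ≤ ε' * (N:ℝ)^(s+1) := by
      rw [abs_mul, abs_of_nonneg (Real.rpow_nonneg (Nat.cast_nonneg N) s)]
      calc (N:ℝ)^s * |S N| ≤ (N:ℝ)^s * (ε' * N) := by
            exact mul_le_mul_of_nonneg_left (hS N hN)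
              (Real.rpow_nonneg (Nat.cast_nonneg N) s)
        _ = ε' * (N:ℝ)^(s+1) := by
            rw [Real.rpow_add_one hNpos.ne' s]; ring
    have hb2 : |∑ n ∈ range N, S n * w n| ≤ C + ε' * (N:ℝ)^(s+1) := by
      calc |∑ n ∈ range N, S n * w n| ≤ ∑ n ∈ range N, |S n| * w n := by
            refine (Finset.abs_sum_le_sum_abs _ _).trans (le_of_eq ?_)
            exact Finset.sum_congr rfl fun n _ => by
              rw [abs_mul, abs_of_nonneg (hw0 n)]
        _ = C + ∑ n ∈ Ico N₀ N, |S n| * w n := by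
            rw [hCdef, Finset.range_eq_Ico, Finset.range_eq_Ico]
            exact (Finset.sum_Ico_consecutive (fun n => |S n| * w n) (Nat.zero_le N₀) hN).symm
        _ ≤ C + ∑ n ∈ Ico N₀ N, (ε' * N) * w n := by
            refine add_le_add_right (Finset.sum_le_sum fun n hn => ?_) C
            have hn' := Finset.mem_Ico.mp hn
            refine mul_le_mul_of_nonneg_right ?_ (hw0 n)
            refine (hS n hn'.1).trans ?_
            have : (n:ℝ) ≤ N := by exact_mod_cast hn'.2.le
            nlinarith
        _ ≤ C + ∑ n ∈ range N, (ε' * N) * w n := by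
            refine add_le_add_right ?_ C
            refine Finset.sum_le_sum_of_subset_of_nonneg ?_ fun n _ _ =>
              mul_nonneg (by positivity) (hw0 n)
            rw [Finset.range_eq_Ico]
            exact Finset.Ico_subset_Ico (Nat.zero_le _) le_rfl
        _ = C + ε' * (N:ℝ)^(s+1) := by
            rw [← Finset.mul_sum, hwdef, my_telescope s (by linarith : (0:ℝ) < s) N,
              Real.rpow_add_one hNpos.ne' s]
            ring
    calc |(N:ℝ)^s * S N - ∑ n ∈ range N, S n * w n|
        ≤ |(N:ℝ)^s * S N| + |∑ n ∈ range N, S n * w n| := abs_sub _ _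
      _ ≤ ε' * (N:ℝ)^(s+1) + (C + ε' * (N:ℝ)^(s+1)) := add_le_add hb1 hb2
      _ = C + 2 * ε' * (N:ℝ)^(s+1) := by ring
  have hlarge : Tendsto (fun N : ℕ => (N:ℝ)^(s+1)) atTop atTop :=
    (tendsto_rpow_atTop hs1).comp tendsto_natCast_atTop_atTop
  filter_upwards [eventually_ge_atTop N₀, eventually_ge_atTop 1,
    hlarge.eventually_ge_atTop (C / ε')] with N hN h1 hCN
  have hNpos : (0:ℝ) < N := by exact_mod_cast h1
  have hpow : (0:ℝ) < (N:ℝ)^(s+1) := Real.rpow_pos_of_pos hNpos _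
  have hCdiv : C / (N:ℝ)^(s+1) ≤ ε' := by
    rw [div_le_iff₀ hpow]
    rw [div_le_iff₀ hε'] at hCN
    linarith [hCN]
  have : ‖(∑ n ∈ Icc 1 N, (n:ℝ)^s * g n) / (N:ℝ)^(s+1)‖
      = |∑ n ∈ Icc 1 N, (n:ℝ)^s * g n| / (N:ℝ)^(s+1) := by
    rw [Real.norm_eq_abs, abs_div, abs_of_pos hpow]
  rw [this]
  have hb := key N hN
  calc |∑ n ∈ Icc 1 N, (n:ℝ)^s * g n| / (N:ℝ)^(s+1)
      ≤ (C + 2 * ε' * (N:ℝ)^(s+1)) / (N:ℝ)^(s+1) := by gcongr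
    _ = C / (N:ℝ)^(s+1) + 2 * ε' := by
        field_simp
    _ ≤ ε' + 2 * ε' := by linarith
    _ < ε := by rw [hε'def]; linarith

theorem stmt_2 (f : ℕ → ℝ) (c : ℝ) (hc : c ≠ 0)
    (h : Tendsto (fun x : ℝ => (1 / x) * ∑ n ∈ Finset.Icc 1 ⌊x⌋₊, f n) atTop (nhds c)) :
    ∀ s : ℝ, 1 ≤ s →
      Tendsto (fun x : ℝ => (∑ n ∈ Finset.Icc 1 ⌊x⌋₊, (n : ℝ) ^ s * f n)
        / ((c / (s + 1)) * x ^ (s + 1))) atTop (nhds 1) := by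
  intro s hs
  have hs1 : (0:ℝ) < s + 1 := by linarith
  -- natural number version of the hypothesis
  have hf_nat : Tendsto (fun N : ℕ => (∑ n ∈ Icc 1 N, f n) / N) atTop (nhds c) := by
    have := h.comp tendsto_natCast_atTop_atTop
    refine this.congr fun N => ?_
    simp [Function.comp, Nat.floor_natCast, one_div, div_eq_inv_mul]
  set g : ℕ → ℝ := fun n => f n - c with hgdef
  have hg : Tendsto (fun N : ℕ => (∑ n ∈ Icc 1 N, g n) / N) atTop (nhds 0) := by
    have h0 := hf_nat.sub_const c
    rw [sub_self] at h0
    refine Tendsto.congr' ?_ h0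
    filter_upwards [eventually_ge_atTop 1] with N hN
    have hNpos : (0:ℝ) < N := by exact_mod_cast hN
    have hsum : ∑ n ∈ Icc 1 N, g n = (∑ n ∈ Icc 1 N, f n) - N * c := by
      rw [hgdef]
      rw [Finset.sum_sub_distrib, Finset.sum_const, Nat.card_Icc]
      simp [nsmul_eq_mul]
    rw [eq_comm, hsum, sub_div, mul_comm ((N:ℝ)) c, mul_div_assoc,
      div_self hNpos.ne', mul_one]
  -- the error sum is little-o of x^(s+1)
  have hUnat := littleB hs hg
  have hU : Tendsto (fun x : ℝ =>
      (∑ n ∈ Icc 1 ⌊x⌋₊, (n:ℝ)^s * g n) / x^(s+1)) atTop (nhds 0) := by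
    have habs : Tendsto (fun x : ℝ =>
        |(∑ n ∈ Icc 1 ⌊x⌋₊, (n:ℝ)^s * g n) / ((⌊x⌋₊:ℝ))^(s+1)|) atTop (nhds 0) := by
      have := (hUnat.comp (tendsto_nat_floor_atTop (α := ℝ))).abs
      simpa [Function.comp] using this
    refine squeeze_zero_norm' ?_ habs
    · filter_upwards [eventually_ge_atTop (1:ℝ)] with x hx
      have hx0 : (0:ℝ) < x := by linarith
      have hfl1 : 1 ≤ ⌊x⌋₊ := Nat.le_floor (by exact_mod_cast hx)
      have hflpos : (0:ℝ) < (⌊x⌋₊:ℝ) := by exact_mod_cast hfl1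
      have hle : ((⌊x⌋₊:ℝ))^(s+1) ≤ x^(s+1) :=
        Real.rpow_le_rpow hflpos.le (Nat.floor_le hx0.le) hs1.le
      have hpow1 : (0:ℝ) < ((⌊x⌋₊:ℝ))^(s+1) := Real.rpow_pos_of_pos hflpos _
      rw [Real.norm_eq_abs, abs_div, abs_of_pos (Real.rpow_pos_of_pos hx0 _)]
      calc |∑ n ∈ Icc 1 ⌊x⌋₊, (n:ℝ)^s * g n| / x^(s+1)
          ≤ |∑ n ∈ Icc 1 ⌊x⌋₊, (n:ℝ)^s * g n| / ((⌊x⌋₊:ℝ))^(s+1) :=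
            div_le_div_of_nonneg_left (abs_nonneg _) hpow1 hle
        _ = |(∑ n ∈ Icc 1 ⌊x⌋₊, (n:ℝ)^s * g n) / ((⌊x⌋₊:ℝ))^(s+1)| := by
            rw [abs_div, abs_of_pos hpow1]
  -- the main sum
  have hP : Tendsto (fun x : ℝ =>
      (∑ n ∈ Icc 1 ⌊x⌋₊, (n:ℝ)^s) / x^(s+1)) atTop (nhds (1/(s+1))) := by
    have hlow : Tendsto (fun x : ℝ => ((⌊x⌋₊:ℝ)/x)^(s+1)/(s+1)) atTop (nhds (1/(s+1))) := by
      have := (tendsto_nat_floor_div_atTop.rpow_const (p := s+1) (Or.inl one_ne_zero)).div_const (s+1)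
      simpa using this
    have hhi : Tendsto (fun x : ℝ => (((⌊x⌋₊:ℝ)+1)/x)^(s+1)/(s+1)) atTop (nhds (1/(s+1))) := by
      have h2 : Tendsto (fun x : ℝ => ((⌊x⌋₊:ℝ)+1)/x) atTop (nhds 1) := by
        have h3 := (tendsto_nat_floor_div_atTop (R := ℝ)).add tendsto_inv_atTop_zero
        rw [add_zero] at h3
        refine h3.congr fun x => ?_
        rw [add_div, one_div]
      have := (h2.rpow_const (p := s+1) (Or.inl one_ne_zero)).div_const (s+1)
      simpa using this
    refine tendsto_of_tendsto_of_tendsto_of_le_of_le' hlow hhi ?_ ?_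
    · filter_upwards [eventually_ge_atTop (1:ℝ)] with x hx
      have hx0 : (0:ℝ) < x := by linarith
      have hpowx : (0:ℝ) < x^(s+1) := Real.rpow_pos_of_pos hx0 _
      rw [Real.div_rpow (Nat.cast_nonneg _) hx0.le, div_right_comm]
      gcongr
      exact (sum_pow_bounds hs ⌊x⌋₊).1
    · filter_upwards [eventually_ge_atTop (1:ℝ)] with x hx
      have hx0 : (0:ℝ) < x := by linarith
      have hpowx : (0:ℝ) < x^(s+1) := Real.rpow_pos_of_pos hx0 _
      rw [Real.div_rpow (by positivity) hx0.le, div_right_comm]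
      gcongr
      exact (sum_pow_bounds hs ⌊x⌋₊).2
  -- combine
  have key : Tendsto (fun x : ℝ =>
      (∑ n ∈ Icc 1 ⌊x⌋₊, (n:ℝ)^s * f n) / x^(s+1)) atTop (nhds (c/(s+1))) := by
    have hcomb := hU.add (hP.const_mul c)
    rw [zero_add] at hcomb
    have hval : c * (1/(s+1)) = c/(s+1) := by ring
    rw [hval] at hcomb
    refine hcomb.congr fun x => ?_
    rw [← mul_div_assoc, ← add_div]
    congr 1
    rw [Finset.mul_sum, ← Finset.sum_add_distrib]
    refine Finset.sum_congr rfl fun n _ => ?_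
    simp only [hgdef]
    ring
  have hfinal := key.div_const (c/(s+1))
  rw [div_self (div_ne_zero hc hs1.ne')] at hfinal
  refine hfinal.congr fun x => ?_
  rw [div_mul_eq_div_div_swap]
end

section
/- If f : ℕ → ℝ and the series ∑_{n=1}^∞ f(n)/n^s converges for a real s ≥ 1, then the average value of f(n)/n^{s−1} tends to zero: lim_{x→∞} (1/x) ∑_{n ≤ x} f(n)/n^{s−1} = 0. -/
open Filter Finset

lemma abel_aux (a : ℕ → ℝ) (N : ℕ) :
    ∑ n ∈ Finset.Icc 1 N, (n : ℝ) * a n =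
      (N + 1) * (∑ n ∈ Finset.Icc 1 N, a n) -
        ∑ i ∈ Finset.range (N + 1), ∑ n ∈ Finset.Icc 1 i, a n := by
  induction N with
  | zero => simp
  | succ N ih =>
      simp only [Finset.sum_Icc_succ_top (Nat.le_add_left 1 N), Finset.sum_range_succ, ih]
      push_cast
      ring

theorem stmt_6 (f : ℕ → ℝ) (s : ℝ) (hs : 1 ≤ s) (l : ℝ)
    (h : Tendsto (fun N : ℕ => ∑ n ∈ Finset.Icc 1 N, f n / (n : ℝ) ^ s) atTop (nhds l)) :
    Tendsto (fun x : ℝ => (1 / x) * ∑ n ∈ Finset.Icc 1 ⌊x⌋₊, f n / (n : ℝ) ^ (s - 1))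
      atTop (nhds 0) := by
  set a : ℕ → ℝ := fun n => f n / (n : ℝ) ^ s with ha
  set S : ℕ → ℝ := fun N => ∑ n ∈ Finset.Icc 1 N, a n with hS
  have key : ∀ N : ℕ, ∑ n ∈ Finset.Icc 1 N, f n / (n : ℝ) ^ (s - 1) =
      ((N : ℝ) + 1) * S N - ∑ i ∈ Finset.range (N + 1), S i := by
    intro N
    rw [hS, ← abel_aux a N]
    apply Finset.sum_congr rfl
    intro n hn
    have hn1 : 1 ≤ n := (Finset.mem_Icc.mp hn).1
    have hnpos : (0 : ℝ) < n := by exact_mod_cast hn1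
    have hpow : (n : ℝ) ^ s = (n : ℝ) ^ (s - 1) * n := by
      have h2 := Real.rpow_add hnpos (s - 1) 1
      rw [Real.rpow_one, sub_add_cancel] at h2
      exact h2
    rw [ha]
    simp only [hpow]
    have h1 : (n : ℝ) ^ (s - 1) ≠ 0 := (Real.rpow_pos_of_pos hnpos _).ne'
    field_simp
  have hfloor : Tendsto (fun x : ℝ => (⌊x⌋₊ : ℝ) / x) atTop (nhds 1) :=
    tendsto_nat_floor_div_atTop
  have hinv : Tendsto (fun x : ℝ => 1 / x) atTop (nhds 0) := by
    simpa using tendsto_inv_atTop_zero.congr (fun x => (one_div x).symm)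
  have hratio : Tendsto (fun x : ℝ => ((⌊x⌋₊ : ℝ) + 1) / x) atTop (nhds 1) := by
    have := hfloor.add hinv
    rw [add_zero] at this
    exact this.congr fun x => (add_div _ _ _).symm
  have hSl : Tendsto (fun x : ℝ => S ⌊x⌋₊) atTop (nhds l) :=
    h.comp tendsto_nat_floor_atTop
  have T1 : Tendsto (fun x : ℝ => ((⌊x⌋₊ : ℝ) + 1) / x * S ⌊x⌋₊) atTop (nhds (1 * l)) :=
    hratio.mul hSl
  have hc : Tendsto (fun n : ℕ => (n : ℝ)⁻¹ • ∑ i ∈ Finset.range n, S i) atTop (nhds l) :=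
    h.cesaro
  have hcomp : Tendsto (fun x : ℝ => ⌊x⌋₊ + 1) atTop atTop :=
    (tendsto_add_atTop_nat 1).comp tendsto_nat_floor_atTop
  have T2 : Tendsto (fun x : ℝ =>
      ((⌊x⌋₊ : ℝ) + 1) / x * (((⌊x⌋₊ + 1 : ℕ) : ℝ)⁻¹ • ∑ i ∈ Finset.range (⌊x⌋₊ + 1), S i))
      atTop (nhds (1 * l)) :=
    hratio.mul (hc.comp hcomp)
  have := T1.sub T2
  rw [sub_self] at this
  refine this.congr fun x => ?_
  rw [key, smul_eq_mul]
  have hne : ((⌊x⌋₊ : ℝ) + 1) ≠ 0 := by positivity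
  have hcancel : ((⌊x⌋₊ : ℝ) + 1) * ((⌊x⌋₊ : ℝ) + 1)⁻¹ = 1 := mul_inv_cancel₀ hne
  push_cast
  linear_combination (-(∑ i ∈ Finset.range (⌊x⌋₊ + 1), S i) / x) * hcancel
end

section
/- Since the series ∑_{n=1}^∞ μ(n)/n converges, it follows that ∑_{n ≤ x} μ(n) = o(x) as x → ∞, where μ is the Möbius function. -/
open Filter Finset Asymptotics ArithmeticFunction Topology

theorem stmt_7 (l : ℝ)
    (h : Tendsto (fun N : ℕ => ∑ n ∈ Finset.Icc 1 N, (moebius n : ℝ) / n) atTop (nhds l)) :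
    (fun x : ℝ => ∑ n ∈ Finset.Icc 1 ⌊x⌋₊, (moebius n : ℝ))
      =o[atTop] (fun x : ℝ => x) := by
  set S : ℕ → ℝ := fun N => ∑ n ∈ Finset.Icc 1 N, (moebius n : ℝ) / n with hS
  set M : ℕ → ℝ := fun N => ∑ n ∈ Finset.Icc 1 N, (moebius n : ℝ) with hM
  -- Abel summation identity
  have key : ∀ N : ℕ, M N = N * S N - ∑ k ∈ Finset.range N, S k := by
    intro N
    induction N with
    | zero => simp [hM, hS]
    | succ n ih =>
      have hIcc : ∀ (f : ℕ → ℝ), ∑ k ∈ Finset.Icc 1 (n+1), f k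
          = (∑ k ∈ Finset.Icc 1 n, f k) + f (n+1) := by
        intro f
        rw [← Finset.Ico_add_one_right_eq_Icc, Finset.sum_Ico_succ_top (by omega), Finset.Ico_add_one_right_eq_Icc]
      have h1 : M (n+1) = M n + (moebius (n+1) : ℝ) := hIcc _
      have h2 : S (n+1) = S n + (moebius (n+1) : ℝ) / ((n+1 : ℕ) : ℝ) := hIcc _
      push_cast at h2
      have h3 : ((n:ℝ)+1) * ((moebius (n+1) : ℝ) / (n+1)) = (moebius (n+1) : ℝ) := by
        field_simp
      rw [h1, ih, Finset.sum_range_succ, h2]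
      push_cast
      ring_nf
      ring_nf at h3
      linarith [h3]
  -- Kronecker: M N / N → 0
  have hces : Tendsto (fun N : ℕ => ((N:ℝ))⁻¹ * ∑ k ∈ Finset.range N, S k) atTop (𝓝 l) :=
    h.cesaro
  have hMn : Tendsto (fun N : ℕ => M N / N) atTop (𝓝 0) := by
    have : Tendsto (fun N : ℕ => S N - ((N:ℝ))⁻¹ * ∑ k ∈ Finset.range N, S k) atTop
        (𝓝 (l - l)) := h.sub hces
    rw [sub_self] at this
    apply this.congr'
    filter_upwards [eventually_gt_atTop 0] with N hN
    have hN' : (N:ℝ) ≠ 0 := Nat.cast_ne_zero.2 hN.ne'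
    rw [key N]
    field_simp
  -- so M =o[atTop] id on ℕ
  have hlo : (fun N : ℕ => M N) =o[atTop] (fun N : ℕ => (N:ℝ)) := by
    rw [isLittleO_iff_tendsto']
    · exact hMn
    · filter_upwards [eventually_gt_atTop 0] with N hN hc
      exact absurd hc (Nat.cast_ne_zero.2 hN.ne')
  -- compose with floor
  have hcomp : (fun x : ℝ => M ⌊x⌋₊) =o[atTop] (fun x : ℝ => ((⌊x⌋₊ : ℕ) : ℝ)) :=
    hlo.comp_tendsto tendsto_nat_floor_atTop
  refine hcomp.trans_isBigO ?_
  rw [isBigO_iff]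
  refine ⟨1, ?_⟩
  filter_upwards [eventually_ge_atTop (0:ℝ)] with x hx
  rw [one_mul, Real.norm_of_nonneg (by positivity), Real.norm_of_nonneg hx]
  exact Nat.floor_le hx
end

section
/- The limit lim_{x→∞} (1/x) ∑_{n ≤ x} (Ω(n) − ω(n)) exists and equals ∑_p 1/(p(p−1)), where the sum is over all primes p. -/
open Filter Finset

-- Ω(n) as a sum of exponents
lemma aux_len_eq_sum (n : ℕ) :
    n.primeFactorsList.length = ∑ p ∈ n.primeFactors, n.factorization p := by
  have : n.primeFactors = (n.primeFactorsList : Multiset ℕ).toFinset := rfl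
  rw [this]
  have := Multiset.toFinset_sum_count_eq (n.primeFactorsList : Multiset ℕ)
  rw [Multiset.coe_card] at this
  rw [← this]
  refine Finset.sum_congr rfl fun p _ => ?_
  rw [Multiset.coe_count, Nat.primeFactorsList_count_eq]

lemma aux_card_le (n : ℕ) : n.primeFactors.card ≤ n.primeFactorsList.length :=
  List.toFinset_card_le _

-- counting for a single n
lemma aux_count_one (N n : ℕ) (h1 : 1 ≤ n) (h2 : n ≤ N) :
    n.primeFactorsList.length - n.primeFactors.card =
      ∑ p ∈ (Finset.range (N + 1)).filter Nat.Prime,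
        ((Finset.Icc 2 (N + 1)).filter (fun k => p ^ k ∣ n)).card := by
  have hn0 : n ≠ 0 := by omega
  rw [aux_len_eq_sum]
  have hcard : n.primeFactors.card = ∑ p ∈ n.primeFactors, 1 := by
    simp
  have hle : ∀ p ∈ n.primeFactors, (fun _ => 1) p ≤ n.factorization p := by
    intro p hp
    exact Nat.Prime.factorization_pos_of_dvd (Nat.prime_of_mem_primeFactors hp) hn0
      (Nat.dvd_of_mem_primeFactors hp)
  rw [hcard, ← Finset.sum_tsub_distrib n.primeFactors hle]
  have hstep : ∀ p ∈ n.primeFactors,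
      n.factorization p - 1 = ((Finset.Icc 2 (N + 1)).filter (fun k => p ^ k ∣ n)).card := by
    intro p hp
    have hpp := Nat.prime_of_mem_primeFactors hp
    have hv : n.factorization p < n := Nat.factorization_lt p hn0
    have hfil : (Finset.Icc 2 (N + 1)).filter (fun k => p ^ k ∣ n) =
        Finset.Icc 2 (n.factorization p) := by
      ext k
      simp only [Finset.mem_filter, Finset.mem_Icc]
      constructor
      · rintro ⟨⟨hk2, _⟩, hdvd⟩
        exact ⟨hk2, (Nat.Prime.pow_dvd_iff_le_factorization hpp hn0).mp hdvd⟩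
      · rintro ⟨hk2, hkv⟩
        refine ⟨⟨hk2, by omega⟩, (Nat.Prime.pow_dvd_iff_le_factorization hpp hn0).mpr hkv⟩
    rw [hfil, Nat.card_Icc]
    omega
  rw [Finset.sum_congr rfl hstep]
  refine Finset.sum_subset ?_ ?_
  · intro p hp
    simp only [Finset.mem_filter, Finset.mem_range]
    refine ⟨?_, Nat.prime_of_mem_primeFactors hp⟩
    have := Nat.le_of_mem_primeFactors hp
    omega
  · intro p hpP hp
    rw [Finset.card_eq_zero, Finset.filter_eq_empty_iff]
    intro k hk
    simp only [Finset.mem_Icc] at hk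
    intro hdvd
    apply hp
    rw [Nat.mem_primeFactors]
    refine ⟨(Finset.mem_filter.mp hpP).2, dvd_trans (dvd_pow_self p (by omega)) hdvd, hn0⟩

-- the main counting identity
lemma aux_count (N : ℕ) :
    ∑ n ∈ Finset.Icc 1 N, (n.primeFactorsList.length - n.primeFactors.card) =
      ∑ p ∈ (Finset.range (N + 1)).filter Nat.Prime,
        ∑ k ∈ Finset.Icc 2 (N + 1), N / p ^ k := by
  have step1 : ∑ n ∈ Finset.Icc 1 N, (n.primeFactorsList.length - n.primeFactors.card) =
      ∑ n ∈ Finset.Icc 1 N, ∑ p ∈ (Finset.range (N + 1)).filter Nat.Prime,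
        ∑ k ∈ Finset.Icc 2 (N + 1), (if p ^ k ∣ n then 1 else 0) := by
    refine Finset.sum_congr rfl fun n hn => ?_
    rw [Finset.mem_Icc] at hn
    rw [aux_count_one N n hn.1 hn.2]
    exact Finset.sum_congr rfl fun p _ => Finset.card_filter _ _
  rw [step1, Finset.sum_comm]
  refine Finset.sum_congr rfl fun p _ => ?_
  rw [Finset.sum_comm]
  refine Finset.sum_congr rfl fun k _ => ?_
  have h1 : Finset.Icc 1 N = Finset.Ioc 0 N := rfl
  rw [h1, ← Nat.Ioc_filter_dvd_card_eq_div N (p ^ k), Finset.card_filter]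

-- limit of a single term
lemma aux_term_tendsto (m : ℕ) (hm : 1 ≤ m) :
    Tendsto (fun x : ℝ => (1 / x) * ((⌊x⌋₊ / m : ℕ) : ℝ)) atTop (nhds (1 / (m : ℝ))) := by
  have hm0 : (0 : ℝ) < m := by exact_mod_cast hm
  have heq : (fun x : ℝ => (1 / x) * ((⌊x / (m : ℝ)⌋₊ : ℕ) : ℝ)) =ᶠ[atTop]
      (fun x : ℝ => (1 / x) * ((⌊x⌋₊ / m : ℕ) : ℝ)) := by
    filter_upwards [eventually_ge_atTop (0 : ℝ)] with x hx
    rw [Nat.floor_div_natCast x m]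
  have key : Tendsto (fun x : ℝ => (1 / x) * ((⌊x / (m : ℝ)⌋₊ : ℕ) : ℝ)) atTop
      (nhds (1 / (m : ℝ) - 0)) := by
    refine tendsto_of_tendsto_of_tendsto_of_le_of_le'
      (g := fun x : ℝ => 1 / (m : ℝ) - 1 / x) (h := fun _ => 1 / (m : ℝ) - 0) ?_ ?_ ?_ ?_
    · simpa only [one_div] using (tendsto_const_nhds).sub tendsto_inv_atTop_zero
    · exact tendsto_const_nhds
    · filter_upwards [eventually_gt_atTop (0 : ℝ)] with x hx
      have hfl : x / (m : ℝ) - 1 ≤ (⌊x / (m : ℝ)⌋₊ : ℝ) := (Nat.sub_one_lt_floor _).le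
      have h2 : (1 / x) * (x / (m : ℝ) - 1) ≤ (1 / x) * (⌊x / (m : ℝ)⌋₊ : ℝ) := by
        apply mul_le_mul_of_nonneg_left hfl
        positivity
      calc 1 / (m : ℝ) - 1 / x = (1 / x) * (x / (m : ℝ) - 1) := by
            field_simp
        _ ≤ _ := h2
    · filter_upwards [eventually_gt_atTop (0 : ℝ)] with x hx
      have hfl : (⌊x / (m : ℝ)⌋₊ : ℝ) ≤ x / (m : ℝ) := Nat.floor_le (by positivity)
      have h2 : (1 / x) * (⌊x / (m : ℝ)⌋₊ : ℝ) ≤ (1 / x) * (x / (m : ℝ)) := by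
        apply mul_le_mul_of_nonneg_left hfl
        positivity
      calc (1 / x) * (⌊x / (m : ℝ)⌋₊ : ℝ) ≤ (1 / x) * (x / (m : ℝ)) := h2
        _ = 1 / (m : ℝ) - 0 := by field_simp; ring
  rw [sub_zero] at key
  exact key.congr' heq

-- the finite sum over a rectangle equals the counting sum
lemma aux_nat_sum (N : ℕ) :
    ∑ q ∈ (((Finset.range (N + 1)).filter Nat.Prime).subtype Nat.Prime) ×ˢ Finset.range N,
      (N / ((q.1 : ℕ)) ^ (q.2 + 2)) =
    ∑ n ∈ Finset.Icc 1 N, (n.primeFactorsList.length - n.primeFactors.card) := by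
  rw [Finset.sum_product, aux_count N]
  have hred : ∀ x : {p : ℕ // p.Prime}, ∑ y ∈ Finset.range N, N / ((x, y).1 : ℕ) ^ ((x, y).2 + 2)
      = ∑ y ∈ Finset.range N, N / (x : ℕ) ^ (y + 2) := fun x => rfl
  simp only [hred]
  rw [Finset.sum_subtype_eq_sum_filter (fun p => ∑ y ∈ Finset.range N, N / p ^ (y + 2))]
  have hff : ((Finset.range (N + 1)).filter Nat.Prime).filter Nat.Prime =
      (Finset.range (N + 1)).filter Nat.Prime := by
    rw [Finset.filter_filter]
    simp
  rw [hff]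
  refine Finset.sum_congr rfl fun p _ => ?_
  have hIcc : Finset.Icc 2 (N + 1) = Finset.Ico 2 (N + 2) := by
    rw [← Finset.Ico_add_one_right_eq_Icc]; rfl
  rw [hIcc, Finset.sum_Ico_eq_sum_range]
  refine Finset.sum_congr (by congr 1) fun j _ => by rw [add_comm]

lemma aux_vanish (N : ℕ) (q : {p : ℕ // p.Prime} × ℕ)
    (hq : q ∉ (((Finset.range (N + 1)).filter Nat.Prime).subtype Nat.Prime) ×ˢ Finset.range N) :
    N / ((q.1 : ℕ)) ^ (q.2 + 2) = 0 := by
  apply Nat.div_eq_of_lt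
  rw [Finset.mem_product, not_and_or] at hq
  rcases hq with h | h
  · rw [Finset.mem_subtype, Finset.mem_filter, Finset.mem_range] at h
    push_neg at h
    have hp : N + 1 ≤ (q.1 : ℕ) := by
      by_contra hc
      exact absurd q.1.2 (h (by omega))
    calc N < (q.1 : ℕ) := by omega
      _ ≤ (q.1 : ℕ) ^ (q.2 + 2) := Nat.le_self_pow (by omega) _
  · rw [Finset.mem_range] at h
    push_neg at h
    calc N < 2 ^ N := Nat.lt_two_pow_self
      _ ≤ 2 ^ (q.2 + 2) := Nat.pow_le_pow_right (by norm_num) (by omega)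
      _ ≤ (q.1 : ℕ) ^ (q.2 + 2) := Nat.pow_le_pow_left q.1.2.two_le _

lemma aux_tsum_eq (N : ℕ) :
    ∑' q : {p : ℕ // p.Prime} × ℕ, ((N / ((q.1 : ℕ)) ^ (q.2 + 2) : ℕ) : ℝ) =
    ∑ n ∈ Finset.Icc 1 N, ((n.primeFactorsList.length : ℝ) - n.primeFactors.card) := by
  rw [tsum_eq_sum (s := (((Finset.range (N + 1)).filter Nat.Prime).subtype Nat.Prime)
      ×ˢ Finset.range N) (fun q hq => by rw [aux_vanish N q hq]; norm_num)]
  rw [← Nat.cast_sum, aux_nat_sum N, Nat.cast_sum]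
  refine Finset.sum_congr rfl fun n _ => ?_
  rw [Nat.cast_sub (aux_card_le n)]

theorem stmt_14 :
    Tendsto (fun x : ℝ => (1 / x) * ∑ n ∈ Finset.Icc 1 ⌊x⌋₊,
        ((n.primeFactorsList.length : ℝ) - n.primeFactors.card))
      atTop (nhds (∑' p : {p : ℕ // p.Prime}, 1 / ((p : ℝ) * ((p : ℝ) - 1)))) := by
  set ι := {p : ℕ // p.Prime} × ℕ with hι
  set F : ℝ → ι → ℝ := fun x q => (1 / x) * ((⌊x⌋₊ / ((q.1 : ℕ)) ^ (q.2 + 2) : ℕ) : ℝ) with hF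
  set G : ι → ℝ := fun q => (((q.1 : ℕ) : ℝ))⁻¹ ^ (q.2 + 2) with hG
  have hcast : ∀ q : ι, G q = 1 / ((((q.1 : ℕ)) ^ (q.2 + 2) : ℕ) : ℝ) := by
    intro q
    rw [hG]
    push_cast
    rw [inv_pow, one_div]
  have hm1 : ∀ q : ι, 1 ≤ ((q.1 : ℕ)) ^ (q.2 + 2) :=
    fun q => Nat.one_le_pow _ _ (by have := q.1.2.two_le; omega)
  -- summability of the dominating function
  have hsumG : Summable G := by
    have h1 : Summable (fun p : {p : ℕ // p.Prime} => (((p : ℕ) : ℝ))⁻¹ ^ 2) := by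
      have h0 : Summable (fun n : ℕ => 1 / (n : ℝ) ^ 2) :=
        Real.summable_one_div_nat_pow.mpr one_lt_two
      have h2 := h0.subtype {p : ℕ | p.Prime}
      refine h2.congr fun p => ?_
      simp [inv_pow, one_div]
    have h2 : Summable (fun j : ℕ => ((2 : ℝ))⁻¹ ^ j) :=
      summable_geometric_of_lt_one (by norm_num) (by norm_num)
    have h3 := h1.mul_of_nonneg h2 (fun p => by positivity) (fun j => by positivity)
    refine Summable.of_nonneg_of_le (fun q => by positivity) (fun q => ?_) h3
    have hp2 : (2 : ℝ) ≤ ((q.1 : ℕ) : ℝ) := by exact_mod_cast q.1.2.two_le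
    have hkey : (((q.1 : ℕ) : ℝ))⁻¹ ^ q.2 ≤ ((2 : ℝ))⁻¹ ^ q.2 := by
      apply pow_le_pow_left₀ (by positivity)
      exact inv_anti₀ (by norm_num) hp2
    calc G q = (((q.1 : ℕ) : ℝ))⁻¹ ^ 2 * (((q.1 : ℕ) : ℝ))⁻¹ ^ q.2 := by
          rw [hG]; rw [← pow_add]; ring_nf
      _ ≤ (((q.1 : ℕ) : ℝ))⁻¹ ^ 2 * ((2 : ℝ))⁻¹ ^ q.2 := by
          apply mul_le_mul_of_nonneg_left hkey (by positivity)
  -- pointwise limits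
  have hlim : ∀ q : ι, Tendsto (fun x => F x q) atTop (nhds (G q)) := by
    intro q
    have := aux_term_tendsto (((q.1 : ℕ)) ^ (q.2 + 2)) (hm1 q)
    rw [← hcast q] at this
    exact this
  -- domination
  have hbound : ∀ᶠ x : ℝ in atTop, ∀ q : ι, ‖F x q‖ ≤ G q := by
    filter_upwards [eventually_ge_atTop (1 : ℝ)] with x hx
    intro q
    have hx0 : (0 : ℝ) < x := lt_of_lt_of_le one_pos hx
    have hm0 : (0 : ℝ) < ((((q.1 : ℕ)) ^ (q.2 + 2) : ℕ) : ℝ) := by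
      exact_mod_cast hm1 q
    rw [Real.norm_eq_abs, abs_of_nonneg (by rw [hF]; positivity)]
    have h1 : ((⌊x⌋₊ / ((q.1 : ℕ)) ^ (q.2 + 2) : ℕ) : ℝ) ≤
        (⌊x⌋₊ : ℝ) / ((((q.1 : ℕ)) ^ (q.2 + 2) : ℕ) : ℝ) := Nat.cast_div_le
    have h2 : (⌊x⌋₊ : ℝ) ≤ x := Nat.floor_le (le_of_lt hx0)
    have h3 : ((⌊x⌋₊ / ((q.1 : ℕ)) ^ (q.2 + 2) : ℕ) : ℝ) ≤
        x / ((((q.1 : ℕ)) ^ (q.2 + 2) : ℕ) : ℝ) :=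
      h1.trans (by gcongr)
    calc F x q ≤ (1 / x) * (x / ((((q.1 : ℕ)) ^ (q.2 + 2) : ℕ) : ℝ)) := by
          rw [hF]
          exact mul_le_mul_of_nonneg_left h3 (by positivity)
      _ = 1 / ((((q.1 : ℕ)) ^ (q.2 + 2) : ℕ) : ℝ) := by field_simp
      _ = G q := (hcast q).symm
  have H := tendsto_tsum_of_dominated_convergence hsumG hlim hbound
  -- identify the limit value
  have hgeo : ∀ p : {p : ℕ // p.Prime}, ∑' j : ℕ, G (p, j) =
      1 / (((p : ℕ) : ℝ) * (((p : ℕ) : ℝ) - 1)) := by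
    intro p
    have hp2 : (2 : ℝ) ≤ ((p : ℕ) : ℝ) := by exact_mod_cast p.2.two_le
    set r : ℝ := (((p : ℕ) : ℝ))⁻¹ with hr
    have hr0 : 0 ≤ r := by positivity
    have hr1 : r < 1 := by
      rw [hr]
      rw [inv_lt_one_iff₀]
      right; linarith
    calc ∑' j : ℕ, G (p, j) = ∑' j : ℕ, r ^ j * r ^ 2 := by
          refine tsum_congr fun j => ?_
          rw [hG, ← pow_add]
      _ = (∑' j : ℕ, r ^ j) * r ^ 2 := tsum_mul_right
      _ = (1 - r)⁻¹ * r ^ 2 := by rw [tsum_geometric_of_lt_one hr0 hr1]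
      _ = 1 / (((p : ℕ) : ℝ) * (((p : ℕ) : ℝ) - 1)) := by
          have h0 : ((p : ℕ) : ℝ) ≠ 0 := by linarith
          have h1 : ((p : ℕ) : ℝ) - 1 ≠ 0 := by
            intro hc
            have : ((p : ℕ) : ℝ) = 1 := by linarith
            linarith
          have h2 : 1 - r ≠ 0 := by
            intro hc
            have : r = 1 := by linarith
            linarith
          rw [hr] at *
          field_simp
  have htarget : ∑' q : ι, G q =
      ∑' p : {p : ℕ // p.Prime}, 1 / ((p : ℝ) * ((p : ℝ) - 1)) := by
    rw [Summable.tsum_prod hsumG]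
    exact tsum_congr fun p => hgeo p
  rw [htarget] at H
  refine Tendsto.congr' ?_ H
  filter_upwards [eventually_ge_atTop (1 : ℝ)] with x hx
  calc ∑' q : ι, F x q = (1 / x) * ∑' q : ι, ((⌊x⌋₊ / ((q.1 : ℕ)) ^ (q.2 + 2) : ℕ) : ℝ) := by
        rw [hF]; exact tsum_mul_left
    _ = (1 / x) * ∑ n ∈ Finset.Icc 1 ⌊x⌋₊,
          ((n.primeFactorsList.length : ℝ) - n.primeFactors.card) := by
        rw [aux_tsum_eq ⌊x⌋₊]
end
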